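/- Let σ = −1 and f(x) = (x² + x⁴/4)^{−3/2}. Fix n ≥ 2, masses m_1,…,m_n > 0 and a constant A > 0. Then there is at most one tuple (r, α_1,…,α_n) with r > 0 and 0 = α_1 < α_2 < … < α_n < 2π such that for every i ∈ {1,…,n}: A² = Σ_{j≠i} m_j·(1 − cos(α_j − α_i))·f(√2·r·√(1 − cos(α_j − α_i))) and 0 = Σ_{j≠i} m_j·sin(α_j − α_i)·f(√2·r·√(1 − cos(α_j − α_i))). In other words, for each fixed set of masses and fixed angular velocity there is at most one negative elliptic relative equilibrium of this polygonal class, up to rotation. -/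

import Mathlib

open Real Finset

/-- The reduced force-law factor of the curved n-body problem with `σ = −1`. -/
noncomputable def fneg (x : ℝ) : ℝ := (x ^ 2 + x ^ 4 / 4) ^ (-(3 : ℝ) / 2)

lemma fneg_pos {x : ℝ} (hx : 0 < x) : 0 < fneg x :=
  Real.rpow_pos_of_pos (by positivity) _

lemma fneg_val {ρ u : ℝ} (hρ : 0 < ρ) (hu : 0 < u) :
    fneg (Real.sqrt 2 * ρ * Real.sqrt u)
      = 1 / (ρ ^ 3 * Real.sqrt (2 * u + ρ ^ 2 * u ^ 2) ^ 3) := by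
  have hV : (0:ℝ) < 2 * u + ρ ^ 2 * u ^ 2 := by positivity
  have hW : (0:ℝ) < Real.sqrt (2 * u + ρ ^ 2 * u ^ 2) := Real.sqrt_pos.2 hV
  have hbase : (Real.sqrt 2 * ρ * Real.sqrt u) ^ 2
      + (Real.sqrt 2 * ρ * Real.sqrt u) ^ 4 / 4
      = (ρ * Real.sqrt (2 * u + ρ ^ 2 * u ^ 2)) ^ 2 := by
    have h2 : (Real.sqrt 2) ^ 2 = 2 := Real.sq_sqrt (by norm_num)
    have hu2 : (Real.sqrt u) ^ 2 = u := Real.sq_sqrt hu.le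
    have hW2 : (Real.sqrt (2 * u + ρ ^ 2 * u ^ 2)) ^ 2 = 2 * u + ρ ^ 2 * u ^ 2 :=
      Real.sq_sqrt hV.le
    have e4 : (Real.sqrt 2 * ρ * Real.sqrt u) ^ 4
        = ((Real.sqrt 2) ^ 2) ^ 2 * ρ ^ 4 * ((Real.sqrt u) ^ 2) ^ 2 := by ring
    have e2 : (Real.sqrt 2 * ρ * Real.sqrt u) ^ 2
        = (Real.sqrt 2) ^ 2 * ρ ^ 2 * (Real.sqrt u) ^ 2 := by ring
    rw [e4, e2, h2, hu2, mul_pow, hW2]; ring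
  have hz : (0:ℝ) < ρ * Real.sqrt (2 * u + ρ ^ 2 * u ^ 2) := by positivity
  rw [fneg, hbase]
  rw [← Real.rpow_natCast (ρ * Real.sqrt (2 * u + ρ ^ 2 * u ^ 2)) 2,
    ← Real.rpow_mul hz.le]
  norm_num
  rw [mul_pow, mul_inv]
  ring

noncomputable def Vf (rr b c d t : ℝ) : ℝ :=
  2*(1 - Real.cos (c + t*d)) + (rr + t*b)^2*(1 - Real.cos (c + t*d))^2

noncomputable def Nfn (rr b c d t : ℝ) : ℝ :=
  2*(1 - Real.cos (c + t*d))*b/(rr + t*b) + Real.sin (c + t*d)*d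

noncomputable def G1 (rr b c d t : ℝ) : ℝ :=
  Nfn rr b c d t * (Vf rr b c d t) ^ (-(3:ℝ)/2) / (rr + t*b)

noncomputable def NN (rr b c d t : ℝ) : ℝ :=
  -(2*(1 - Real.cos (c + t*d))^2*(4 + 5*(rr + t*b)^2*(1 - Real.cos (c + t*d)))*b^2)
  - 4*(rr + t*b)*(1 - Real.cos (c + t*d))*(1 + 2*(rr + t*b)^2*(1 - Real.cos (c + t*d)))*b*(Real.sin (c + t*d)*d)
  - 3*(rr + t*b)^2*(1 + (rr + t*b)^2*(1 - Real.cos (c + t*d)))*(Real.sin (c + t*d)*d)^2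
  + (rr + t*b)^2*(Vf rr b c d t)*(Real.cos (c + t*d))*d^2

noncomputable def G2 (rr b c d t : ℝ) : ℝ :=
  NN rr b c d t * (Vf rr b c d t) ^ (-(5:ℝ)/2) / (rr + t*b)^3

lemma hasDerivAt_G1 (rr b c d t : ℝ) (hρ : 0 < rr + t*b) (hx : Real.cos (c + t*d) < 1) :
    HasDerivAt (fun s => G1 rr b c d s) (G2 rr b c d t) t := by
  have hR : HasDerivAt (fun s : ℝ => rr + s*b) b t := by
    simpa using ((hasDerivAt_id t).mul_const b).const_add rr
  have hTh : HasDerivAt (fun s : ℝ => c + s*d) d t := by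
    simpa using ((hasDerivAt_id t).mul_const d).const_add c
  have hcos : HasDerivAt (fun s => Real.cos (c + s*d)) (-Real.sin (c + t*d)*d) t := by
    exact (Real.hasDerivAt_cos (c + t*d)).comp t hTh
  have hsin : HasDerivAt (fun s => Real.sin (c + s*d)) (Real.cos (c + t*d)*d) t := by
    exact (Real.hasDerivAt_sin (c + t*d)).comp t hTh
  have hu : HasDerivAt (fun s => 1 - Real.cos (c + s*d)) (Real.sin (c + t*d)*d) t := by
    simpa using hcos.const_sub 1
  have hu0 : 0 < 1 - Real.cos (c + t*d) := by linarith
  have hVpos : 0 < Vf rr b c d t := by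
    unfold Vf; positivity
  have hV : HasDerivAt (fun s => Vf rr b c d s)
      (2*(Real.sin (c + t*d)*d) + (2*(rr + t*b)*b*(1 - Real.cos (c + t*d))^2
        + (rr + t*b)^2*(2*(1 - Real.cos (c + t*d))*(Real.sin (c + t*d)*d)))) t := by
    have h1 := hu.const_mul (2:ℝ)
    have h2 := (hR.pow 2).mul (hu.pow 2)
    have := h1.add h2
    unfold Vf
    exact this.congr_deriv (by simp only [Pi.pow_apply]; ring)
  have hP : HasDerivAt (fun s => (Vf rr b c d s) ^ (-(3:ℝ)/2))
      ((2*(Real.sin (c + t*d)*d) + (2*(rr + t*b)*b*(1 - Real.cos (c + t*d))^2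
        + (rr + t*b)^2*(2*(1 - Real.cos (c + t*d))*(Real.sin (c + t*d)*d))))
        * (-(3:ℝ)/2) * (Vf rr b c d t) ^ (-(5:ℝ)/2)) t := by
    have h := hV.rpow_const (p := -(3:ℝ)/2) (Or.inl hVpos.ne')
    rw [show (-(3:ℝ)/2 - 1) = (-(5:ℝ)/2) by norm_num] at h
    exact h
  have hNf : HasDerivAt (fun s => Nfn rr b c d s)
      (((2*(Real.sin (c + t*d)*d)*b)*(rr + t*b) - (2*(1 - Real.cos (c + t*d))*b)*b)/(rr + t*b)^2
        + Real.cos (c + t*d)*d*d) t := by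
    have h1 := ((hu.const_mul (2:ℝ)).mul_const b).div hR hρ.ne'
    have h2 := hsin.mul_const d
    have := h1.add h2
    unfold Nfn
    exact this
  have hG := (hNf.mul hP).div hR hρ.ne'
  have hsplit : (Vf rr b c d t) ^ (-(3:ℝ)/2)
      = Vf rr b c d t * (Vf rr b c d t) ^ (-(5:ℝ)/2) := by
    rw [show (-(3:ℝ)/2) = 1 + (-(5:ℝ)/2) by norm_num, Real.rpow_add hVpos, Real.rpow_one]
  have hval : ((((2*(Real.sin (c + t*d)*d)*b)*(rr + t*b) - (2*(1 - Real.cos (c + t*d))*b)*b)/(rr + t*b)^2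
        + Real.cos (c + t*d)*d*d) * (Vf rr b c d t) ^ (-(3:ℝ)/2)
      + Nfn rr b c d t * ((2*(Real.sin (c + t*d)*d) + (2*(rr + t*b)*b*(1 - Real.cos (c + t*d))^2
        + (rr + t*b)^2*(2*(1 - Real.cos (c + t*d))*(Real.sin (c + t*d)*d))))
        * (-(3:ℝ)/2) * (Vf rr b c d t) ^ (-(5:ℝ)/2))) * (rr + t*b)
      - Nfn rr b c d t * (Vf rr b c d t) ^ (-(3:ℝ)/2) * b = G2 rr b c d t * (rr + t*b)^2 := by
    rw [hsplit]
    unfold G2 NN Nfn Vf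
    field_simp
    ring
  unfold G1
  exact hG.congr_deriv (by
    rw [div_eq_iff (by positivity : ((rr + t*b)^2) ≠ 0)]
    simp only [Pi.mul_apply]
    linarith [hval])

lemma NN_eq (rr b c d t : ℝ) :
    NN rr b c d t =
      -((2*(1 - Real.cos (c + t*d))^2*(4 + 5*(rr + t*b)^2*(1 - Real.cos (c + t*d))))*b^2
        + (4*(rr + t*b)*(1 - Real.cos (c + t*d))*(1 + 2*(rr + t*b)^2*(1 - Real.cos (c + t*d)))*Real.sin (c + t*d))*b*d
        + ((rr + t*b)^2*(1 - Real.cos (c + t*d))*((4 - (1 - Real.cos (c + t*d)))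
            + (rr + t*b)^2*(1 - Real.cos (c + t*d))*(5 - 2*(1 - Real.cos (c + t*d)))))*d^2) := by
  have hy2 : Real.sin (c + t*d) ^ 2 = 1 - Real.cos (c + t*d) ^ 2 := Real.sin_sq _
  unfold NN Vf
  linear_combination (-3*(rr + t*b)^2*(1 + (rr + t*b)^2*(1 - Real.cos (c + t*d)))*d^2) * hy2

lemma quad_nonneg (rr b c d t : ℝ) (hρ : 0 < rr + t*b) (hx : Real.cos (c + t*d) < 1) :
    0 ≤ (2*(1 - Real.cos (c + t*d))^2*(4 + 5*(rr + t*b)^2*(1 - Real.cos (c + t*d))))*b^2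
        + (4*(rr + t*b)*(1 - Real.cos (c + t*d))*(1 + 2*(rr + t*b)^2*(1 - Real.cos (c + t*d)))*Real.sin (c + t*d))*b*d
        + ((rr + t*b)^2*(1 - Real.cos (c + t*d))*((4 - (1 - Real.cos (c + t*d)))
            + (rr + t*b)^2*(1 - Real.cos (c + t*d))*(5 - 2*(1 - Real.cos (c + t*d)))))*d^2 := by
  set ρ := rr + t*b with hρdef
  set X := Real.cos (c + t*d) with hX
  set Y := Real.sin (c + t*d) with hY
  have hy2 : Y ^ 2 = 1 - X ^ 2 := Real.sin_sq _
  have hx1 : -1 ≤ X := Real.neg_one_le_cos _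
  set u := 1 - X with hu
  have hu0 : 0 < u := by simp [hu]; linarith
  have hu2 : u ≤ 2 := by simp [hu]; linarith
  set a := 2*u^2*(4+5*ρ^2*u) with ha
  set β := 4*ρ*u*(1+2*ρ^2*u)*Y with hβ
  set cc := ρ^2*u*((4 - u) + ρ^2*u*(5 - 2*u)) with hcc
  have hapos : 0 < a := by positivity
  have hdisc : 4*a*cc - β^2
      = 8*ρ^2*u^3*((12-2*u) + ρ^2*u*(24-5*u) + ρ^4*u^2*(9-2*u)) := by
    rw [ha, hβ, hcc, hu]
    linear_combination (-16*ρ^2*(1-X)^2*(1+2*ρ^2*(1-X))^2) * hy2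
  have hbr : 0 ≤ (12-2*u) + ρ^2*u*(24-5*u) + ρ^4*u^2*(9-2*u) := by
    have t1 : 0 ≤ ρ^2*u*(24-5*u) := by
      have : (0:ℝ) ≤ 24 - 5*u := by linarith
      positivity
    have t2 : 0 ≤ ρ^4*u^2*(9-2*u) := by
      have : (0:ℝ) ≤ 9 - 2*u := by linarith
      positivity
    linarith
  have hdnn : 0 ≤ 4*a*cc - β^2 := by rw [hdisc]; positivity
  have hSOS : 4*a*(a*b^2 + β*(b*d) + cc*d^2) = (2*a*b + β*d)^2 + (4*a*cc - β^2)*d^2 := by ring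
  have h0 : 0 ≤ a*b^2 + β*(b*d) + cc*d^2 := by
    have h4 : 0 ≤ 4*a*(a*b^2 + β*(b*d) + cc*d^2) := by
      rw [hSOS]; exact add_nonneg (sq_nonneg _) (mul_nonneg hdnn (sq_nonneg _))
    exact (mul_nonneg_iff_of_pos_left (by positivity : (0:ℝ) < 4*a)).1 h4
  calc (0:ℝ) ≤ a*b^2 + β*(b*d) + cc*d^2 := h0
    _ = _ := by rw [ha, hβ, hcc]; ring

lemma Vf_pos (rr b c d t : ℝ) (hρ : 0 < rr + t*b) (hx : Real.cos (c + t*d) < 1) :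
    0 < Vf rr b c d t := by
  have hu0 : 0 < 1 - Real.cos (c + t*d) := by linarith
  unfold Vf; positivity

lemma G2_nonpos (rr b c d t : ℝ) (hρ : 0 < rr + t*b) (hx : Real.cos (c + t*d) < 1) :
    G2 rr b c d t ≤ 0 := by
  have hNN : NN rr b c d t ≤ 0 := by
    rw [NN_eq]; have := quad_nonneg rr b c d t hρ hx; linarith
  have hQ : 0 < (Vf rr b c d t) ^ (-(5:ℝ)/2) :=
    Real.rpow_pos_of_pos (Vf_pos rr b c d t hρ hx) _
  unfold G2
  apply div_nonpos_of_nonpos_of_nonneg _ (by positivity)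
  exact mul_nonpos_of_nonpos_of_nonneg hNN hQ.le

lemma G2_neg (rr c d t : ℝ) (hρ : 0 < rr + t*(0:ℝ)) (hx : Real.cos (c + t*d) < 1)
    (hd : d ≠ 0) : G2 rr 0 c d t < 0 := by
  have hu0 : 0 < 1 - Real.cos (c + t*d) := by linarith
  have hx1 : -1 ≤ Real.cos (c + t*d) := Real.neg_one_le_cos _
  have hNN : NN rr 0 c d t < 0 := by
    rw [NN_eq]
    have hcc : 0 < ((rr + t*0)^2*(1 - Real.cos (c + t*d))*((4 - (1 - Real.cos (c + t*d)))
            + (rr + t*0)^2*(1 - Real.cos (c + t*d))*(5 - 2*(1 - Real.cos (c + t*d)))))*d^2 := by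
      have h1 : (0:ℝ) < 4 - (1 - Real.cos (c + t*d)) := by linarith
      have h2 : (0:ℝ) < 5 - 2*(1 - Real.cos (c + t*d)) := by linarith
      have h3 : (0:ℝ) < (4 - (1 - Real.cos (c + t*d)))
          + (rr + t*0)^2*(1 - Real.cos (c + t*d))*(5 - 2*(1 - Real.cos (c + t*d))) := by positivity
      positivity
    nlinarith [hcc]
  have hQ : 0 < (Vf rr 0 c d t) ^ (-(5:ℝ)/2) :=
    Real.rpow_pos_of_pos (Vf_pos rr 0 c d t hρ hx) _
  unfold G2
  apply div_neg_of_neg_of_pos _ (by positivity)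
  exact mul_neg_of_neg_of_pos hNN hQ

lemma G1_eq (rr b c d t : ℝ) (hρ : 0 < rr + t*b) (hx : Real.cos (c + t*d) < 1) :
    G1 rr b c d t =
      2*(rr + t*b)*(1 - Real.cos (c + t*d))
          * fneg (Real.sqrt 2 * (rr + t*b) * Real.sqrt (1 - Real.cos (c + t*d))) * b
      + (rr + t*b)^2 * Real.sin (c + t*d)
          * fneg (Real.sqrt 2 * (rr + t*b) * Real.sqrt (1 - Real.cos (c + t*d))) * d := by
  have hu0 : 0 < 1 - Real.cos (c + t*d) := by linarith
  have hV : 0 < Vf rr b c d t := Vf_pos rr b c d t hρ hx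
  have hW : 0 < Real.sqrt (Vf rr b c d t) := Real.sqrt_pos.2 hV
  have hWr : Real.sqrt (Vf rr b c d t) ^ 3 = (Vf rr b c d t) ^ ((3:ℝ)/2) := by
    rw [← Real.rpow_natCast (Real.sqrt (Vf rr b c d t)) 3, Real.sqrt_eq_rpow,
      ← Real.rpow_mul hV.le]
    norm_num
  have hfv : fneg (Real.sqrt 2 * (rr + t*b) * Real.sqrt (1 - Real.cos (c + t*d)))
      = 1 / ((rr + t*b) ^ 3 * Real.sqrt (Vf rr b c d t) ^ 3) := by
    have := fneg_val hρ hu0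
    rw [this]
    congr 2
  have hrp : (Vf rr b c d t) ^ (-(3:ℝ)/2) = 1 / Real.sqrt (Vf rr b c d t) ^ 3 := by
    rw [hWr, show (-(3:ℝ)/2) = -((3:ℝ)/2) by norm_num, Real.rpow_neg hV.le, one_div]
  rw [G1, Nfn, hrp, hfv]
  have hW3 : Real.sqrt (Vf rr b c d t) ^ 3 ≠ 0 := by positivity
  field_simp

lemma convex_pos {x y t : ℝ} (hx : 0 < x) (hy : 0 < y) (h0 : 0 ≤ t) (h1 : t ≤ 1) :
    0 < x + t*(y - x) := by
  rcases lt_or_ge t 1 with h | h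
  · nlinarith [mul_pos (by linarith : (0:ℝ) < 1 - t) hx, mul_nonneg h0 hy.le]
  · have : t = 1 := le_antisymm h1 h
    rw [this]; nlinarith

lemma convex_lt {x y B t : ℝ} (hx : x < B) (hy : y < B) (h0 : 0 ≤ t) (h1 : t ≤ 1) :
    x + t*(y - x) < B := by
  rcases lt_or_ge t 1 with h | h
  · nlinarith [mul_lt_mul_of_pos_left hx (by linarith : (0:ℝ) < 1 - t),
      mul_le_mul_of_nonneg_left hy.le h0]
  · have : t = 1 := le_antisymm h1 h
    rw [this]; nlinarith

lemma cos_lt_one_of_mem (x : ℝ) (h0 : 0 < x) (h2 : x < 2*π) : Real.cos x < 1 := by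
  have h1 := Real.cos_two_mul (x/2)
  rw [show 2*(x/2) = x by ring] at h1
  have h2' := Real.sin_sq_add_cos_sq (x/2)
  have hs : 0 < Real.sin (x/2) :=
    Real.sin_pos_of_pos_of_lt_pi (by linarith) (by linarith)
  nlinarith

lemma sum_erase_comm {n : ℕ} (F : Fin n → Fin n → ℝ) :
    ∑ i, ∑ j ∈ Finset.univ.erase i, F i j = ∑ j, ∑ i ∈ Finset.univ.erase j, F i j := by
  have h : ∀ (G : Fin n → Fin n → ℝ) (i : Fin n),
      ∑ j ∈ Finset.univ.erase i, G i j = ∑ j, if j ≠ i then G i j else 0 := by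
    intro G i
    rw [← Finset.filter_ne', Finset.sum_filter]
  calc ∑ i, ∑ j ∈ Finset.univ.erase i, F i j
      = ∑ i, ∑ j, if j ≠ i then F i j else 0 := by
        exact Finset.sum_congr rfl fun i _ => h F i
    _ = ∑ j, ∑ i, if i ≠ j then F i j else 0 := by
        rw [Finset.sum_comm]
        refine Finset.sum_congr rfl fun j _ => Finset.sum_congr rfl fun i _ => ?_
        simp [ne_comm]
    _ = ∑ j, ∑ i ∈ Finset.univ.erase j, F i j := by
        refine Finset.sum_congr rfl fun j _ => ?_
        rw [← Finset.filter_ne', Finset.sum_filter]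

/-- For `σ = −1`, fixed masses `m₁,…,mₙ > 0` and fixed angular velocity `A > 0`,
there is at most one tuple `(r, α₁,…,αₙ)` with `r > 0` and
`0 = α₁ < α₂ < … < αₙ < 2π` solving the polygonal negative elliptic relative
equilibrium system
`A² = Σ_{j≠i} m_j (1 − cos(α_j−α_i)) f(√2 r √(1−cos(α_j−α_i)))`,
`0 = Σ_{j≠i} m_j sin(α_j−α_i) f(√2 r √(1−cos(α_j−α_i)))`. -/
theorem negative_elliptic_relative_equilibrium_unique
    (n : ℕ) (hn : 2 ≤ n) (m : Fin n → ℝ) (hm : ∀ i, 0 < m i)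
    (A : ℝ) (hA : 0 < A)
    (r r' : ℝ) (α α' : Fin n → ℝ)
    (hr : 0 < r) (hr' : 0 < r')
    (hα0 : α ⟨0, by omega⟩ = 0) (hα'0 : α' ⟨0, by omega⟩ = 0)
    (hαmono : StrictMono α) (hα'mono : StrictMono α')
    (hα2π : ∀ i, α i < 2 * π) (hα'2π : ∀ i, α' i < 2 * π)
    (hsys : ∀ i : Fin n,
      A ^ 2 = (∑ j ∈ Finset.univ.erase i,
          m j * (1 - Real.cos (α j - α i)) *
            fneg (Real.sqrt 2 * r * Real.sqrt (1 - Real.cos (α j - α i)))) ∧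
      0 = ∑ j ∈ Finset.univ.erase i,
          m j * Real.sin (α j - α i) *
            fneg (Real.sqrt 2 * r * Real.sqrt (1 - Real.cos (α j - α i))))
    (hsys' : ∀ i : Fin n,
      A ^ 2 = (∑ j ∈ Finset.univ.erase i,
          m j * (1 - Real.cos (α' j - α' i)) *
            fneg (Real.sqrt 2 * r' * Real.sqrt (1 - Real.cos (α' j - α' i)))) ∧
      0 = ∑ j ∈ Finset.univ.erase i,
          m j * Real.sin (α' j - α' i) *
            fneg (Real.sqrt 2 * r' * Real.sqrt (1 - Real.cos (α' j - α' i)))) :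
    r = r' ∧ ∀ i, α i = α' i := by
  by_contra hcon
  set i0 : Fin n := ⟨0, by omega⟩ with hi0
  set M : ℝ := ∑ i, m i with hM
  have hMpos : 0 < M := Finset.sum_pos (fun i _ => hm i) ⟨i0, Finset.mem_univ _⟩
  have hαnn : ∀ i, 0 ≤ α i := by
    intro i
    have : α i0 ≤ α i := hαmono.monotone (by
      show i0 ≤ i
      exact Fin.mk_le_of_le_val (Nat.zero_le _))
    rw [hα0] at this; exact this
  have hα'nn : ∀ i, 0 ≤ α' i := by
    intro i
    have : α' i0 ≤ α' i := hα'mono.monotone (by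
      show i0 ≤ i
      exact Fin.mk_le_of_le_val (Nat.zero_le _))
    rw [hα'0] at this; exact this
  have hρpos : ∀ t ∈ Set.Icc (0:ℝ) 1, 0 < r + t*(r'-r) := by
    intro t ht
    exact convex_pos hr hr' ht.1 ht.2
  have hang : ∀ (i j : Fin n), i ≠ j → ∀ t ∈ Set.Icc (0:ℝ) 1,
      Real.cos ((α j - α i) + t*((α' j - α' i) - (α j - α i))) < 1 := by
    have key : ∀ (i j : Fin n), i < j → ∀ t ∈ Set.Icc (0:ℝ) 1,
        0 < (α j - α i) + t*((α' j - α' i) - (α j - α i)) ∧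
        (α j - α i) + t*((α' j - α' i) - (α j - α i)) < 2*π := by
      intro i j hij t ht
      obtain ⟨h0, h1⟩ := ht
      have a1 : 0 < α j - α i := by have := hαmono hij; linarith
      have a2 : α j - α i < 2*π := by have := hα2π j; have := hαnn i; linarith
      have a3 : 0 < α' j - α' i := by have := hα'mono hij; linarith
      have a4 : α' j - α' i < 2*π := by have := hα'2π j; have := hα'nn i; linarith
      exact ⟨convex_pos a1 a3 h0 h1, convex_lt a2 a4 h0 h1⟩
    intro i j hij t ht
    rcases lt_or_gt_of_ne hij with h | h
    · obtain ⟨k1, k2⟩ := key i j h t ht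
      exact cos_lt_one_of_mem _ k1 k2
    · obtain ⟨k1, k2⟩ := key j i h t ht
      rw [show (α j - α i) + t*((α' j - α' i) - (α j - α i))
          = -((α i - α j) + t*((α' i - α' j) - (α i - α j))) by ring, Real.cos_neg]
      exact cos_lt_one_of_mem _ k1 k2
  set D : ℝ → ℝ := fun t => (1/2) * ∑ i, ∑ j ∈ Finset.univ.erase i,
      (m i * m j) * G1 r (r'-r) (α j - α i) ((α' j - α' i) - (α j - α i)) t
    - A^2 * M * ((r + t*(r'-r)) * (r'-r)) with hD
  set D2 : ℝ → ℝ := fun t => (1/2) * ∑ i, ∑ j ∈ Finset.univ.erase i,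
      (m i * m j) * G2 r (r'-r) (α j - α i) ((α' j - α' i) - (α j - α i)) t
    - A^2 * M * ((r'-r) * (r'-r)) with hD2
  have hDderiv : ∀ t ∈ Set.Icc (0:ℝ) 1, HasDerivAt D (D2 t) t := by
    intro t ht
    have hsum : HasDerivAt (fun s => ∑ i, ∑ j ∈ Finset.univ.erase i,
        (m i * m j) * G1 r (r'-r) (α j - α i) ((α' j - α' i) - (α j - α i)) s)
        (∑ i, ∑ j ∈ Finset.univ.erase i,
        (m i * m j) * G2 r (r'-r) (α j - α i) ((α' j - α' i) - (α j - α i)) t) t := by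
      apply HasDerivAt.fun_sum
      intro i _
      apply HasDerivAt.fun_sum
      intro j hj
      have hji : j ≠ i := (Finset.mem_erase.1 hj).1
      exact (hasDerivAt_G1 r (r'-r) _ _ t (hρpos t ht)
        (hang i j (Ne.symm hji) t ht)).const_mul _
    have hquad : HasDerivAt (fun s : ℝ => A^2 * M * ((r + s*(r'-r)) * (r'-r)))
        (A^2 * M * ((r'-r) * (r'-r))) t := by
      have h1 : HasDerivAt (fun s : ℝ => r + s*(r'-r)) (r'-r) t := by
        simpa using ((hasDerivAt_id t).mul_const (r'-r)).const_add r
      simpa using ((h1.mul_const (r'-r)).const_mul (A^2*M))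
    exact (hsum.const_mul _).sub hquad
  have hcont : ContinuousOn D (Set.Icc 0 1) :=
    fun t ht => (hDderiv t ht).continuousAt.continuousWithinAt
  have hD2neg : ∀ t ∈ Set.Ioo (0:ℝ) 1, D2 t < 0 := by
    intro t ht
    have ht' : t ∈ Set.Icc (0:ℝ) 1 := ⟨ht.1.le, ht.2.le⟩
    have hterm : ∀ i : Fin n, ∀ j ∈ Finset.univ.erase i,
        (m i * m j) * G2 r (r'-r) (α j - α i) ((α' j - α' i) - (α j - α i)) t ≤ 0 := by
      intro i j hj
      have hji : j ≠ i := (Finset.mem_erase.1 hj).1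
      exact mul_nonpos_of_nonneg_of_nonpos (mul_pos (hm i) (hm j)).le
        (G2_nonpos r (r'-r) _ _ t (hρpos t ht') (hang i j (Ne.symm hji) t ht'))
    have hsum_np : ∑ i, ∑ j ∈ Finset.univ.erase i,
        (m i * m j) * G2 r (r'-r) (α j - α i) ((α' j - α' i) - (α j - α i)) t ≤ 0 :=
      Finset.sum_nonpos fun i _ => Finset.sum_nonpos fun j hj => hterm i j hj
    by_cases hb : r' - r = 0
    · -- angles differ
      have hα_ne : ∃ k, α k ≠ α' k := by
        by_contra hall
        push_neg at hall
        exact hcon ⟨by linarith [sub_eq_zero.1 hb], hall⟩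
      obtain ⟨k, hk⟩ := hα_ne
      have hk0 : k ≠ i0 := by
        intro hkk
        rw [hkk] at hk
        exact hk (by rw [hα0, hα'0])
      have hstrict : ∑ j ∈ Finset.univ.erase i0,
          (m i0 * m j) * G2 r (r'-r) (α j - α i0) ((α' j - α' i0) - (α j - α i0)) t < 0 := by
        have hmem : k ∈ Finset.univ.erase i0 := Finset.mem_erase.2 ⟨hk0, Finset.mem_univ _⟩
        have hkterm : (m i0 * m k) * G2 r (r'-r) (α k - α i0) ((α' k - α' i0) - (α k - α i0)) t < 0 := by
          have hd : (α' k - α' i0) - (α k - α i0) ≠ 0 := by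
            rw [hα0, hα'0]
            intro hz
            apply hk
            linarith
          have hρ0 : 0 < r + t*(0:ℝ) := by
            have := hρpos t ht'
            rw [hb] at this
            exact this
          have hx0 : Real.cos ((α k - α i0) + t*((α' k - α' i0) - (α k - α i0))) < 1 :=
            hang i0 k (Ne.symm hk0) t ht'
          have hx0' : Real.cos ((α k - α i0) + t*((α' k - α' i0) - (α k - α i0))) < 1 := hx0
          have hfin := mul_neg_of_pos_of_neg (mul_pos (hm i0) (hm k)) (G2_neg r _ _ t hρ0 hx0' hd)
          rw [hb]
          exact hfin
        calc ∑ j ∈ Finset.univ.erase i0,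
            (m i0 * m j) * G2 r (r'-r) (α j - α i0) ((α' j - α' i0) - (α j - α i0)) t
            < ∑ _j ∈ Finset.univ.erase i0, (0:ℝ) := by
              apply Finset.sum_lt_sum (fun j hj => hterm i0 j hj) ⟨k, hmem, hkterm⟩
          _ = 0 := by simp
      have houter : ∑ i, ∑ j ∈ Finset.univ.erase i,
          (m i * m j) * G2 r (r'-r) (α j - α i) ((α' j - α' i) - (α j - α i)) t < 0 := by
        calc _ < ∑ _i : Fin n, (0:ℝ) := by
              apply Finset.sum_lt_sum
                (fun i _ => Finset.sum_nonpos fun j hj => hterm i j hj)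
                ⟨i0, Finset.mem_univ _, hstrict⟩
          _ = 0 := by simp
      simp only [hD2]
      have hq : 0 ≤ A^2 * M * ((r'-r) * (r'-r)) := by positivity
      linarith [houter]
    · have hbb : 0 < (r'-r)*(r'-r) := mul_self_pos.2 hb
      simp only [hD2]
      have hq : 0 < A^2 * M * ((r'-r) * (r'-r)) :=
        mul_pos (mul_pos (pow_pos hA 2) hMpos) hbb
      linarith [hsum_np]
  have hmem0 : (0:ℝ) ∈ Set.Icc (0:ℝ) 1 := by norm_num
  have hmem1 : (1:ℝ) ∈ Set.Icc (0:ℝ) 1 := by norm_num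
  -- value of D at 0
  have hstep0 : ∀ i : Fin n, ∀ j ∈ Finset.univ.erase i,
      (m i * m j) * G1 r (r'-r) (α j - α i) ((α' j - α' i) - (α j - α i)) 0
      = (2*r*(r'-r)*m i) * (m j * (1 - Real.cos (α j - α i)) *
            fneg (Real.sqrt 2 * r * Real.sqrt (1 - Real.cos (α j - α i))))
        + (r^2*m i) * (m j * Real.sin (α j - α i) *
            fneg (Real.sqrt 2 * r * Real.sqrt (1 - Real.cos (α j - α i))) * (α' j - α j))
        - (r^2*m i*(α' i - α i)) * (m j * Real.sin (α j - α i) *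
            fneg (Real.sqrt 2 * r * Real.sqrt (1 - Real.cos (α j - α i)))) := by
    intro i j hj
    have hji : j ≠ i := (Finset.mem_erase.1 hj).1
    have h1 : 0 < r + 0*(r'-r) := hρpos 0 hmem0
    have h2 := hang i j (Ne.symm hji) 0 hmem0
    rw [G1_eq r (r'-r) _ _ 0 h1 h2]
    simp only [zero_mul, add_zero]
    ring
  have hin0 : ∀ i : Fin n,
      ∑ j ∈ Finset.univ.erase i,
        (m i * m j) * G1 r (r'-r) (α j - α i) ((α' j - α' i) - (α j - α i)) 0
      = (2*r*(r'-r)*m i) * A^2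
        + (r^2*m i) * ∑ j ∈ Finset.univ.erase i, (m j * Real.sin (α j - α i) *
            fneg (Real.sqrt 2 * r * Real.sqrt (1 - Real.cos (α j - α i))) * (α' j - α j)) := by
    intro i
    rw [Finset.sum_congr rfl (hstep0 i), Finset.sum_sub_distrib, Finset.sum_add_distrib,
      ← Finset.mul_sum, ← Finset.mul_sum, ← Finset.mul_sum, ← (hsys i).1, ← (hsys i).2]
    ring
  have hTT0 : ∑ i, ∑ j ∈ Finset.univ.erase i,
      (m i) * (m j * Real.sin (α j - α i) *
        fneg (Real.sqrt 2 * r * Real.sqrt (1 - Real.cos (α j - α i))) * (α' j - α j)) = 0 := by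
    rw [sum_erase_comm]
    apply Finset.sum_eq_zero
    intro j _
    have hswap : ∀ i ∈ Finset.univ.erase j,
        (m i) * (m j * Real.sin (α j - α i) *
          fneg (Real.sqrt 2 * r * Real.sqrt (1 - Real.cos (α j - α i))) * (α' j - α j))
        = (m j * (α' j - α j)) * -(m i * Real.sin (α i - α j) *
            fneg (Real.sqrt 2 * r * Real.sqrt (1 - Real.cos (α i - α j)))) := by
      intro i _
      rw [show α j - α i = -(α i - α j) by ring, Real.sin_neg, Real.cos_neg]
      ring
    rw [Finset.sum_congr rfl hswap, ← Finset.mul_sum, Finset.sum_neg_distrib, ← (hsys j).2]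
    ring
  have hend0 : D 0 = 0 := by
    simp only [hD]
    rw [Finset.sum_congr rfl (fun i _ => hin0 i), Finset.sum_add_distrib,
      ← Finset.sum_mul, ← Finset.mul_sum, ← hM]
    have e2 : r^2 * (∑ i, ∑ j ∈ Finset.univ.erase i,
          (m i) * (m j * Real.sin (α j - α i) *
            fneg (Real.sqrt 2 * r * Real.sqrt (1 - Real.cos (α j - α i))) * (α' j - α j)))
        = ∑ i, (r^2*m i) * ∑ j ∈ Finset.univ.erase i, (m j * Real.sin (α j - α i) *
            fneg (Real.sqrt 2 * r * Real.sqrt (1 - Real.cos (α j - α i))) * (α' j - α j)) := by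
      rw [Finset.mul_sum]
      refine Finset.sum_congr rfl fun i _ => ?_
      rw [← Finset.mul_sum, ← mul_assoc]
    rw [← e2, hTT0]
    ring
  -- value of D at 1
  have hstep1 : ∀ i : Fin n, ∀ j ∈ Finset.univ.erase i,
      (m i * m j) * G1 r (r'-r) (α j - α i) ((α' j - α' i) - (α j - α i)) 1
      = (2*r'*(r'-r)*m i) * (m j * (1 - Real.cos (α' j - α' i)) *
            fneg (Real.sqrt 2 * r' * Real.sqrt (1 - Real.cos (α' j - α' i))))
        + (r'^2*m i) * (m j * Real.sin (α' j - α' i) *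
            fneg (Real.sqrt 2 * r' * Real.sqrt (1 - Real.cos (α' j - α' i))) * (α' j - α j))
        - (r'^2*m i*(α' i - α i)) * (m j * Real.sin (α' j - α' i) *
            fneg (Real.sqrt 2 * r' * Real.sqrt (1 - Real.cos (α' j - α' i)))) := by
    intro i j hj
    have hji : j ≠ i := (Finset.mem_erase.1 hj).1
    have h1 : 0 < r + 1*(r'-r) := hρpos 1 hmem1
    have h2 := hang i j (Ne.symm hji) 1 hmem1
    rw [G1_eq r (r'-r) _ _ 1 h1 h2]
    rw [show r + 1*(r'-r) = r' by ring,
      show (α j - α i) + 1*((α' j - α' i) - (α j - α i)) = α' j - α' i by ring]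
    ring
  have hin1 : ∀ i : Fin n,
      ∑ j ∈ Finset.univ.erase i,
        (m i * m j) * G1 r (r'-r) (α j - α i) ((α' j - α' i) - (α j - α i)) 1
      = (2*r'*(r'-r)*m i) * A^2
        + (r'^2*m i) * ∑ j ∈ Finset.univ.erase i, (m j * Real.sin (α' j - α' i) *
            fneg (Real.sqrt 2 * r' * Real.sqrt (1 - Real.cos (α' j - α' i))) * (α' j - α j)) := by
    intro i
    rw [Finset.sum_congr rfl (hstep1 i), Finset.sum_sub_distrib, Finset.sum_add_distrib,
      ← Finset.mul_sum, ← Finset.mul_sum, ← Finset.mul_sum, ← (hsys' i).1, ← (hsys' i).2]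
    ring
  have hTT1 : ∑ i, ∑ j ∈ Finset.univ.erase i,
      (m i) * (m j * Real.sin (α' j - α' i) *
        fneg (Real.sqrt 2 * r' * Real.sqrt (1 - Real.cos (α' j - α' i))) * (α' j - α j)) = 0 := by
    rw [sum_erase_comm]
    apply Finset.sum_eq_zero
    intro j _
    have hswap : ∀ i ∈ Finset.univ.erase j,
        (m i) * (m j * Real.sin (α' j - α' i) *
          fneg (Real.sqrt 2 * r' * Real.sqrt (1 - Real.cos (α' j - α' i))) * (α' j - α j))
        = (m j * (α' j - α j)) * -(m i * Real.sin (α' i - α' j) *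
            fneg (Real.sqrt 2 * r' * Real.sqrt (1 - Real.cos (α' i - α' j)))) := by
      intro i _
      rw [show α' j - α' i = -(α' i - α' j) by ring, Real.sin_neg, Real.cos_neg]
      ring
    rw [Finset.sum_congr rfl hswap, ← Finset.mul_sum, Finset.sum_neg_distrib, ← (hsys' j).2]
    ring
  have hend1 : D 1 = 0 := by
    simp only [hD]
    rw [Finset.sum_congr rfl (fun i _ => hin1 i), Finset.sum_add_distrib,
      ← Finset.sum_mul, ← Finset.mul_sum, ← hM]
    have e2 : r'^2 * (∑ i, ∑ j ∈ Finset.univ.erase i,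
          (m i) * (m j * Real.sin (α' j - α' i) *
            fneg (Real.sqrt 2 * r' * Real.sqrt (1 - Real.cos (α' j - α' i))) * (α' j - α j)))
        = ∑ i, (r'^2*m i) * ∑ j ∈ Finset.univ.erase i, (m j * Real.sin (α' j - α' i) *
            fneg (Real.sqrt 2 * r' * Real.sqrt (1 - Real.cos (α' j - α' i))) * (α' j - α j)) := by
      rw [Finset.mul_sum]
      refine Finset.sum_congr rfl fun i _ => ?_
      rw [← Finset.mul_sum, ← mul_assoc]
    rw [← e2, hTT1]
    ring
  -- strict antitonicity gives a contradiction
  have hanti : StrictAntiOn D (Set.Icc 0 1) := by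
    apply strictAntiOn_of_deriv_neg (convex_Icc 0 1) hcont
    intro t ht
    rw [interior_Icc] at ht
    rw [(hDderiv t ⟨ht.1.le, ht.2.le⟩).deriv]
    exact hD2neg t ht
  have hlt := hanti hmem0 hmem1 zero_lt_one
  rw [hend0, hend1] at hlt
  exact lt_irrefl 0 hlt
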